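/- Let k ∈ ℕ. For a permutation π ∈ S_{k+1} whose disjoint cycle decomposition has cycles of lengths n_1,…,n_t (fixed points counted as cycles of length 1), let D(π) = Π_{i=1}^t det(A(C_{6 n_i})), where A(C_n) is the adjacency matrix of the cycle graph on n vertices. Then Σ_{π ∈ S_{k+1}} sgn(π) · D(π) ≠ 0. -/

import Mathlib

/-- The adjacency matrix of the simple cycle graph `C_n` (for `n ≥ 3`): vertices
`0, …, n-1`, with `A i j = 1` exactly when `i` and `j` are consecutive modulo `n`. -/
def cycAdj (n : ℕ) : Matrix (Fin n) (Fin n) ℝ := fun i j =>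
  if (j : ℕ) = ((i : ℕ) + 1) % n ∨ (i : ℕ) = ((j : ℕ) + 1) % n then 1 else 0

open Matrix Equiv
open Fin.CommRing

lemma fin_one_ne_zero' (m : ℕ) : (1 : Fin (m+2)) ≠ 0 := by
  intro hh
  have := congrArg Fin.val hh
  simp [Fin.val_one] at this

lemma fin_add_one_ne (m : ℕ) (i : Fin (m+2)) : i + 1 ≠ i := by
  intro hh
  have h2 : i + 1 = i + 0 := by rw [add_zero]; exact hh
  exact fin_one_ne_zero' m (add_left_cancel h2)

lemma fin_sub_one_ne (m : ℕ) (i : Fin (m+2)) : i - 1 ≠ i := by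
  intro hh
  have : i = i + 1 := sub_eq_iff_eq_add.mp hh
  exact fin_add_one_ne m i this.symm

lemma perm_classify (m : ℕ) (σ : Equiv.Perm (Fin (m+2)))
    (h : ∀ i, σ i = i ∨ σ i = i - 1) : σ = 1 ∨ σ = (finRotate (m+2))⁻¹ := by
  classical
  set s : Finset (Fin (m+2)) := Finset.univ.filter (fun i => σ i = i - 1) with hs
  have hterm : ∀ i : Fin (m+2), σ i - i = if σ i = i - 1 then (-1 : Fin (m+2)) else 0 := by
    intro i
    rcases h i with h1 | h1
    · have hne : ¬ (σ i = i - 1) := by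
        rw [h1]
        exact fun hh => fin_sub_one_ne m i hh.symm
      rw [if_neg hne, h1, sub_self]
    · rw [if_pos h1, h1]; ring
  have hsum0 : ∑ i : Fin (m+2), (σ i - i) = 0 := by
    rw [Finset.sum_sub_distrib]
    rw [Equiv.sum_comp σ (fun x => x)]
    exact sub_self _
  have hsum1 : ∑ i : Fin (m+2), (σ i - i) = -(s.card : Fin (m+2)) := by
    calc ∑ i : Fin (m+2), (σ i - i)
        = ∑ i : Fin (m+2), (if σ i = i - 1 then (-1 : Fin (m+2)) else 0) :=
          Finset.sum_congr rfl (fun i _ => hterm i)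
      _ = ∑ i ∈ s, (-1 : Fin (m+2)) := by rw [hs, Finset.sum_filter]
      _ = s.card • (-1 : Fin (m+2)) := by rw [Finset.sum_const]
      _ = -(s.card : Fin (m+2)) := by rw [nsmul_eq_mul]; ring
  have hcast : (s.card : Fin (m+2)) = 0 := by
    have := hsum0.symm.trans hsum1
    exact neg_eq_zero.mp this.symm
  have hdvd : (m+2) ∣ s.card := Fin.natCast_eq_zero.mp hcast
  have hle : s.card ≤ m + 2 := by
    have := Finset.card_filter_le Finset.univ (fun i => σ i = i - 1)
    simpa using this
  rcases Nat.eq_zero_or_pos s.card with h0 | hpos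
  · left
    apply Equiv.ext
    intro i
    have : i ∉ s := by rw [Finset.card_eq_zero.mp h0]; exact Finset.notMem_empty i
    rw [hs] at this
    simp only [Finset.mem_filter, Finset.mem_univ, true_and] at this
    rcases h i with h1 | h1
    · rw [Equiv.Perm.one_apply]; exact h1
    · exact absurd h1 this
  · right
    have hcard : s.card = m + 2 := le_antisymm hle (Nat.le_of_dvd hpos hdvd)
    have hall : ∀ i : Fin (m+2), σ i = i - 1 := by
      intro i
      have huniv : s = Finset.univ := Finset.eq_of_subset_of_card_le (Finset.filter_subset _ _)
        (by rw [hcard]; simp)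
      have hi : i ∈ s := huniv ▸ Finset.mem_univ i
      rw [hs] at hi
      simpa using hi
    apply Equiv.ext
    intro i
    rw [hall i]
    have hrot : finRotate (m+2) (i - 1) = i := by
      rw [finRotate_succ_apply]
      ring
    exact Equiv.Perm.eq_inv_iff_eq.mpr hrot

lemma det_one_add_rot (m : ℕ) :
    (1 + Equiv.Perm.permMatrix ℝ (finRotate (m+2))).det = 1 + (-1 : ℝ)^(m+1) := by
  classical
  set Q := Equiv.Perm.permMatrix ℝ (finRotate (m+2)) with hQ
  have hQapp : ∀ a b : Fin (m+2), Q a b = if a + 1 = b then (1:ℝ) else 0 := by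
    intro a b
    rw [hQ]
    simp [Equiv.Perm.permMatrix, PEquiv.toMatrix_apply, Equiv.toPEquiv_apply,
      finRotate_succ_apply, eq_comm]
  have hrotne : (1 : Equiv.Perm (Fin (m+2))) ≠ (finRotate (m+2))⁻¹ := by
    intro hh
    have hr1 : finRotate (m+2) = 1 := inv_eq_one.mp hh.symm
    have h1 : (finRotate (m+2)) 0 = 0 := by rw [hr1]; rfl
    rw [finRotate_succ_apply, zero_add] at h1
    exact fin_one_ne_zero' m h1
  rw [Matrix.det_apply']
  rw [← Finset.sum_subset
    (Finset.subset_univ {(1 : Equiv.Perm (Fin (m+2))), (finRotate (m+2))⁻¹})]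
  · rw [Finset.sum_pair hrotne]
    have t1 : ∀ i : Fin (m+2), (1 + Q) ((1 : Equiv.Perm (Fin (m+2))) i) i = 1 := by
      intro i
      simp [Matrix.add_apply, hQapp, Matrix.one_apply, fin_add_one_ne m i]
    have t2 : ∀ i : Fin (m+2), (1 + Q) ((finRotate (m+2))⁻¹ i) i = 1 := by
      intro i
      have hinv : (finRotate (m+2))⁻¹ i = i - 1 := by
        symm
        rw [Equiv.Perm.eq_inv_iff_eq, finRotate_succ_apply]
        ring
      have hne : (finRotate (m+2))⁻¹ i ≠ i := by rw [hinv]; exact fin_sub_one_ne m i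
      have haddone : (finRotate (m+2))⁻¹ i + 1 = i := by rw [hinv]; ring
      simp [Matrix.add_apply, hQapp, Matrix.one_apply, hne, haddone]
    rw [Finset.prod_congr rfl (fun i _ => t1 i), Finset.prod_congr rfl (fun i _ => t2 i),
      Finset.prod_const_one]
    rw [Equiv.Perm.sign_inv]
    have hs : Equiv.Perm.sign (finRotate (m+2)) = (-1)^(m+1) := sign_finRotate (m+2)
    rw [hs]
    simp
  · intro σ _ hσ
    simp only [Finset.mem_insert, Finset.mem_singleton] at hσ
    push_neg at hσ
    have hnall : ¬ (∀ i, σ i = i ∨ σ i = i - 1) := by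
      intro hall
      rcases perm_classify m σ hall with h1 | h1
      · exact hσ.1 h1
      · exact hσ.2 h1
    push_neg at hnall
    obtain ⟨i, hi1, hi2⟩ := hnall
    have hzero : (1 + Q) (σ i) i = 0 := by
      have h1 : ¬ (σ i + 1 = i) := fun hh => hi2 (eq_sub_iff_add_eq.mpr hh)
      simp [Matrix.add_apply, hQapp, Matrix.one_apply, hi1, h1]
    have hprod : ∏ j : Fin (m+2), (1 + Q) (σ j) j = 0 :=
      Finset.prod_eq_zero (Finset.mem_univ i) hzero
    rw [hprod, mul_zero]

lemma permMatrix_apply (n : ℕ) (τ : Equiv.Perm (Fin n)) (a b : Fin n) :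
    Equiv.Perm.permMatrix ℝ τ a b = if τ a = b then (1:ℝ) else 0 := by
  simp [Equiv.Perm.permMatrix, PEquiv.toMatrix_apply, Equiv.toPEquiv_apply]

lemma det_cycAdj_even (m : ℕ) : (cycAdj (2*m+4)).det = -(1 + (-1:ℝ)^(m+1))^2 := by
  classical
  set σ : Equiv.Perm (Fin (2*m+4)) := finRotate (2*m+4) with hσdef
  have hσapp : ∀ z : Fin (2*m+4), σ z = z + 1 := fun z => finRotate_succ_apply (n := 2*m+3) z
  have hval1 : ((1 : Fin (2*m+4)) : ℕ) = 1 := Fin.val_one (2*m+2)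
  have h1v : ∀ z : Fin (2*m+4), ((z + 1 : Fin (2*m+4)) : ℕ) = ((z:ℕ) + 1) % (2*m+4) := by
    intro z
    rw [Fin.val_add, hval1]
  have hinv : ∀ i : Fin (2*m+4), σ⁻¹ i = i - 1 := by
    intro i
    symm
    rw [Equiv.Perm.eq_inv_iff_eq, hσapp]
    ring
  have key : cycAdj (2*m+4) = ((1 + Equiv.Perm.permMatrix ℝ (σ*σ)).submatrix (⇑(σ⁻¹)) id) := by
    ext i j
    rw [Matrix.submatrix_apply, id_eq]
    have hmul : σ (σ (i - 1)) = i + 1 := by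
      rw [← hinv i, show σ (σ⁻¹ i) = i from σ.apply_symm_apply i, hσapp]
    simp only [cycAdj, Matrix.add_apply, Matrix.one_apply, permMatrix_apply,
      Equiv.Perm.mul_apply, hinv, hmul]
    have hA : ((j:ℕ) = ((i:ℕ)+1) % (2*m+4)) ↔ i + 1 = j := by
      rw [← h1v]
      exact ⟨fun h => Fin.val_injective h.symm, fun h => (congrArg Fin.val h).symm⟩
    have hB : ((i:ℕ) = ((j:ℕ)+1) % (2*m+4)) ↔ j + 1 = i := by
      rw [← h1v]
      exact ⟨fun h => Fin.val_injective h.symm, fun h => (congrArg Fin.val h).symm⟩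
    have hsub : (i - 1 = j) ↔ (j + 1 = i) := by
      rw [sub_eq_iff_eq_add]
      exact eq_comm
    rw [if_congr (or_congr hA hB) rfl rfl]
    by_cases hc1 : i + 1 = j <;> by_cases hc2 : j + 1 = i
    · exfalso
      have h2 : ((1:Fin (2*m+4)) + 1) ≠ 0 := by
        intro hh
        have hv := congrArg Fin.val hh
        rw [h1v, hval1, Nat.mod_eq_of_lt (by omega)] at hv
        simp at hv
      apply h2
      apply add_left_cancel (a := i)
      rw [← add_assoc, add_zero, hc1]
      exact hc2
    · simp [hc1, hc2, hsub]
    · simp [hc1, hc2, hsub]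
    · simp [hc1, hc2, hsub]
  have hblock : (1 + Equiv.Perm.permMatrix ℝ (σ*σ)).det
      = ((1 + Equiv.Perm.permMatrix ℝ (finRotate (m+2))).det)^2 := by
    have e : (m+2)*2 = 2*m+4 := by ring
    set f : Fin (m+2) × Fin 2 ≃ Fin (2*m+4) := finProdFinEquiv.trans (finCongr e) with hfdef
    have hfv : ∀ x : Fin (m+2) × Fin 2, ((f x : Fin (2*m+4)) : ℕ) = (x.2:ℕ) + 2 * (x.1:ℕ) := by
      intro x
      rw [hfdef]
      simp only [Equiv.trans_apply, finCongr_apply, Fin.coe_cast]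
      exact finProdFinEquiv_apply_val x
    have hstep : ∀ (q : Fin (m+2)) (p : Fin 2), f (q,p) + 1 + 1 = f (q+1, p) := by
      intro q p
      apply Fin.val_injective
      rw [h1v, h1v, hfv, hfv]
      simp only
      have hq1 : ((q+1 : Fin (m+2)) : ℕ) = ((q:ℕ)+1) % (m+2) := by
        rw [Fin.val_add, Fin.val_one m]
      rw [hq1]
      have hp2 : (p:ℕ) < 2 := p.isLt
      have hq2 : (q:ℕ) < m+2 := q.isLt
      rcases Nat.lt_or_ge ((q:ℕ)+1) (m+2) with hlt | hge
      · have e1 : ((p:ℕ) + 2*(q:ℕ) + 1) % (2*m+4) = (p:ℕ) + 2*(q:ℕ) + 1 :=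
          Nat.mod_eq_of_lt (by omega)
        rw [Nat.mod_eq_of_lt hlt, e1, Nat.mod_eq_of_lt (by omega)]
        omega
      · have hqe : (q:ℕ) = m+1 := by omega
        rw [hqe, show m+1+1 = m+2 from rfl, Nat.mod_self]
        have hp01 : (p:ℕ) = 0 ∨ (p:ℕ) = 1 := by omega
        rcases hp01 with h|h <;> rw [h]
        · have e1 : (0 + 2*(m+1) + 1) % (2*m+4) = 2*m+3 := by
            have : 0 + 2*(m+1) + 1 = 2*m+3 := by ring
            rw [this]
            exact Nat.mod_eq_of_lt (by omega)
          rw [e1, show 2*m+3+1 = 2*m+4 from by ring, Nat.mod_self]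
        · have e1 : (1 + 2*(m+1) + 1) % (2*m+4) = 0 := by
            have : 1 + 2*(m+1) + 1 = 2*m+4 := by ring
            rw [this]
            exact Nat.mod_self _
          rw [e1, Nat.mod_eq_of_lt (by omega)]
    rw [← Matrix.det_submatrix_equiv_self f]
    have hbd : (1 + Equiv.Perm.permMatrix ℝ (σ*σ)).submatrix f f
        = Matrix.blockDiagonal (fun _ : Fin 2 => 1 + Equiv.Perm.permMatrix ℝ (finRotate (m+2))) := by
      ext x y
      obtain ⟨q, p⟩ := x
      obtain ⟨q', p'⟩ := y
      rw [Matrix.submatrix_apply]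
      have hss : σ (σ (f (q,p))) = f (q+1, p) := by
        rw [hσapp, hσapp, hstep]
      simp only [Matrix.add_apply, Matrix.one_apply, permMatrix_apply,
        Equiv.Perm.mul_apply, hss, Matrix.blockDiagonal_apply, finRotate_succ_apply (n := m+1)]
      simp only [f.injective.eq_iff, Prod.mk.injEq]
      by_cases hpp : p = p' <;> by_cases hqq : q = q' <;> by_cases hq1 : q + 1 = q'
      · exfalso
        exact fin_add_one_ne m q (by rw [hq1, hqq])
      all_goals simp [hpp, hqq, hq1]
    rw [hbd, Matrix.det_blockDiagonal, Finset.prod_const]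
    norm_num
  rw [key, Matrix.det_permute, hblock, Equiv.Perm.sign_inv]
  have hsgn : Equiv.Perm.sign σ = (-1)^(2*m+3) := sign_finRotate (2*m+4)
  rw [hsgn, det_one_add_rot]
  have hcast : ((((-1:ℤˣ)^(2*m+3) : ℤˣ) : ℤ) : ℝ) = -1 := by
    push_cast
    exact Odd.neg_one_pow ⟨m+1, by ring⟩
  rw [hcast]
  ring

lemma det_cycAdj_six_mul (c : ℕ) (hc : 1 ≤ c) :
    (cycAdj (6*c)).det = if Odd c then (-4:ℝ) else 0 := by
  have h6 : 6*c = 2*(3*c-2)+4 := by omega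
  rw [h6, det_cycAdj_even (3*c-2)]
  rcases Nat.even_or_odd c with he | ho
  · rw [if_neg (by simpa [Nat.not_odd_iff_even] using he)]
    obtain ⟨a, rfl⟩ := he
    have : 3*(a+a)-2+1 = 2*(3*a-1)+1 := by omega
    rw [this, Odd.neg_one_pow ⟨3*a-1, rfl⟩]
    ring
  · rw [if_pos ho]
    obtain ⟨a, rfl⟩ := ho
    have : 3*(2*a+1)-2+1 = 2*(3*a+1) := by omega
    rw [this, Even.neg_one_pow ⟨3*a+1, by ring⟩]
    norm_num

lemma det_cycAdj_six : (cycAdj 6).det = -4 := by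
  have h := det_cycAdj_six_mul 1 le_rfl
  rw [if_pos (by norm_num : Odd 1)] at h
  have h6 : 6 * 1 = 6 := by norm_num
  rw [h6] at h
  exact h

lemma units_cast_pow (e : ℕ) : ((((-1:ℤˣ)^e : ℤˣ) : ℤ) : ℝ) = (-1:ℝ)^e := by
  push_cast
  ring

/-- **Key step in answering de la Harpe and Jones.** For every `k`, the signed sum over
all permutations `π ∈ S_{k+1}` of the products of the determinants of the adjacency
matrices of the cycles `C_{6 nᵢ}`, where `n₁, …, n_t` are the cycle lengths of `π`
(fixed points counting as cycles of length `1`), is non-zero. -/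
theorem sum_sign_det_cycles_ne_zero (k : ℕ) :
    ∑ π : Equiv.Perm (Fin (k + 1)),
      ((Equiv.Perm.sign π : ℤ) : ℝ) *
        ((π.cycleType.map fun c => (cycAdj (6 * c)).det).prod *
          (cycAdj 6).det ^ (k + 1 - π.support.card)) ≠ 0 := by
  classical
  have term_eq : ∀ π : Equiv.Perm (Fin (k+1)), (∀ c ∈ π.cycleType, Odd c) →
      ((Equiv.Perm.sign π : ℤ) : ℝ) *
        ((π.cycleType.map fun c => (cycAdj (6 * c)).det).prod *
          (cycAdj 6).det ^ (k + 1 - π.support.card))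
      = (-1:ℝ)^(k+1) * 4^(Multiset.card π.cycleType + (k+1 - π.support.card)) := by
    intro π hodd
    have hmap : (π.cycleType.map fun c => (cycAdj (6*c)).det)
        = π.cycleType.map (Function.const ℕ (-4:ℝ)) :=
      Multiset.map_congr rfl (fun c hc => by
        have h2 : 2 ≤ c := Equiv.Perm.two_le_of_mem_cycleType hc
        rw [det_cycAdj_six_mul c (by omega), if_pos (hodd c hc)]
        rfl)
    rw [hmap, Multiset.map_const, Multiset.prod_replicate, det_cycAdj_six,
      Equiv.Perm.sign_of_cycleType, units_cast_pow, ← pow_add]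
    have hS : π.support.card ≤ k+1 := by
      have := Finset.card_le_univ π.support
      simpa [Finset.card_fin] using this
    have hsum : π.cycleType.sum = π.support.card := Equiv.Perm.sum_cycleType π
    rw [show ((-4:ℝ)) = (-1) * 4 from by norm_num, mul_pow, ← mul_assoc, ← pow_add]
    have hexp : (π.cycleType.sum + Multiset.card π.cycleType)
        + (Multiset.card π.cycleType + (k+1 - π.support.card))
        = 2*(Multiset.card π.cycleType) + (k+1) := by rw [hsum]; omega
    rw [hexp, pow_add, pow_mul, neg_one_sq, one_pow, one_mul]
  have hpos : (0:ℝ) < ∑ π : Equiv.Perm (Fin (k + 1)), (-1:ℝ)^(k+1) *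
      (((Equiv.Perm.sign π : ℤ) : ℝ) *
        ((π.cycleType.map fun c => (cycAdj (6 * c)).det).prod *
          (cycAdj 6).det ^ (k + 1 - π.support.card))) := by
    apply Finset.sum_pos'
    · intro π _
      by_cases hodd : ∀ c ∈ π.cycleType, Odd c
      · rw [term_eq π hodd, ← mul_assoc, ← pow_add, Even.neg_one_pow ⟨k+1, rfl⟩, one_mul]
        positivity
      · push_neg at hodd
        obtain ⟨c, hc, hce⟩ := hodd
        rw [Nat.not_odd_iff_even] at hce
        have h2 : 2 ≤ c := Equiv.Perm.two_le_of_mem_cycleType hc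
        have hdet0 : (cycAdj (6*c)).det = 0 := by
          rw [det_cycAdj_six_mul c (by omega), if_neg (by rwa [Nat.not_odd_iff_even])]
        have hprod0 : (π.cycleType.map fun c => (cycAdj (6*c)).det).prod = 0 :=
          Multiset.prod_eq_zero (Multiset.mem_map.mpr ⟨c, hc, hdet0⟩)
        rw [hprod0, zero_mul, mul_zero, mul_zero]
    · refine ⟨1, Finset.mem_univ 1, ?_⟩
      rw [term_eq 1 (by simp [Equiv.Perm.cycleType_one]), ← mul_assoc, ← pow_add,
        Even.neg_one_pow ⟨k+1, rfl⟩, one_mul]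
      positivity
  intro hzero
  rw [← Finset.mul_sum, hzero, mul_zero] at hpos
  exact lt_irrefl 0 hpos
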